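/- Fix a prime p > 3 and a positive integer n ≥ 2, and write the base-p expansion of n as n = Σ_{i=1}^{k} a_i p^{b_i}, where 0 < a_i ≤ p-1 for each i and 0 ≤ b_1 < b_2 < ... < b_k. Then Π_{i=1}^{k} (a_i! · p^{b_i}) ≤ ((p-1)!)^((n-1)/(p-2)), where the right-hand side is a real power with exponent (n-1)/(p-2). -/

import Mathlib

lemma aux_fact_mul_pow_le (a q : ℕ) (h : a ≤ q) :
    a.factorial * (a + 1) ^ (q - a) ≤ q.factorial := by
  induction q, h using Nat.le_induction with
  | base => simp
  | succ q hq ih =>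
    have h1 : q + 1 - a = (q - a) + 1 := by omega
    rw [h1, pow_succ, ← mul_assoc, Nat.factorial_succ]
    calc a.factorial * (a + 1) ^ (q - a) * (a + 1)
        ≤ q.factorial * (q + 1) := Nat.mul_le_mul ih (by omega)
      _ = (q + 1) * q.factorial := mul_comm _ _

lemma aux_fact_le_pow (a : ℕ) (h : 1 ≤ a) : a.factorial ≤ (a + 1) ^ (a - 1) := by
  induction a, h using Nat.le_induction with
  | base => simp
  | succ a ha ih =>
    have h1 : a + 1 - 1 = (a - 1) + 1 := by omega
    rw [h1, Nat.factorial_succ]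
    calc (a + 1) * a.factorial ≤ (a + 1) * (a + 1) ^ (a - 1) :=
          Nat.mul_le_mul_left _ ih
      _ = (a + 1) ^ ((a - 1) + 1) := by rw [pow_succ, mul_comm]
      _ ≤ (a + 1 + 1) ^ ((a - 1) + 1) := Nat.pow_le_pow_left (by omega) _

lemma aux_fact_pow_le (a q : ℕ) (h1 : 1 ≤ a) (h2 : a ≤ q) :
    (a.factorial) ^ (q - 1) ≤ (q.factorial) ^ (a - 1) := by
  have e : q - 1 = (a - 1) + (q - a) := by omega
  rw [e, pow_add]
  calc (a.factorial) ^ (a - 1) * (a.factorial) ^ (q - a)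
      ≤ (a.factorial) ^ (a - 1) * ((a + 1) ^ (a - 1)) ^ (q - a) :=
        Nat.mul_le_mul_left _ (Nat.pow_le_pow_left (aux_fact_le_pow a h1) _)
    _ = (a.factorial) ^ (a - 1) * ((a + 1) ^ (q - a)) ^ (a - 1) := by
        rw [← pow_mul, ← pow_mul, Nat.mul_comm (a - 1) (q - a)]
    _ = (a.factorial * (a + 1) ^ (q - a)) ^ (a - 1) := (mul_pow _ _ _).symm
    _ ≤ (q.factorial) ^ (a - 1) := Nat.pow_le_pow_left (aux_fact_mul_pow_le a q h2) _

lemma aux_exp_le (p b : ℕ) (hp : 3 ≤ p) : b * (p - 2) ≤ p ^ b - 1 := by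
  induction b with
  | zero => simp
  | succ b ih =>
    have e0 : (b + 1) * (p - 2) = b * (p - 2) + (p - 2) := by ring
    have e1 : p ^ (b + 1) = p ^ b * (p - 1) + p ^ b := by
      rw [pow_succ, ← Nat.mul_succ]
      congr 1
      omega
    have e2 : p - 1 ≤ p ^ b * (p - 1) := Nat.le_mul_of_pos_left _ (Nat.pow_pos (by omega))
    have e3 : 1 ≤ p ^ b := Nat.one_le_pow _ _ (by omega)
    omega

lemma aux_p_le_fact (p : ℕ) (hp : 5 ≤ p) : p ≤ (p - 1).factorial := by
  obtain ⟨m, rfl⟩ : ∃ m, p = m + 5 := ⟨p - 5, by omega⟩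
  rw [show m + 5 - 1 = m + 4 from by omega]
  have h : (m + 4).factorial = (m + 4) * (m + 3) * (m + 2).factorial := by
    rw [show m + 4 = (m + 3) + 1 from by omega, Nat.factorial_succ,
      show m + 3 = (m + 2) + 1 from by omega, Nat.factorial_succ]
    ring
  have h2 : 1 ≤ (m + 2).factorial := Nat.factorial_pos _
  calc m + 5 ≤ (m + 4) * (m + 3) := by nlinarith
    _ ≤ (m + 4) * (m + 3) * (m + 2).factorial := Nat.le_mul_of_pos_right _ h2
    _ = (m + 4).factorial := h.symm

lemma aux_digit_bound (p a b : ℕ) (hp : 5 ≤ p) (h1 : 1 ≤ a) (h2 : a ≤ p - 1) :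
    (a.factorial * p ^ b) ^ (p - 2) ≤ ((p - 1).factorial) ^ (a * p ^ b - 1) := by
  have hA : (a.factorial) ^ (p - 2) ≤ ((p - 1).factorial) ^ (a - 1) := by
    have := aux_fact_pow_le a (p - 1) h1 h2
    rwa [show p - 1 - 1 = p - 2 from by omega] at this
  have hexp : b * (p - 2) ≤ a * (p ^ b - 1) := by
    calc b * (p - 2) ≤ p ^ b - 1 := aux_exp_le p b (by omega)
      _ ≤ a * (p ^ b - 1) := Nat.le_mul_of_pos_left _ h1
  have hB : p ^ (b * (p - 2)) ≤ ((p - 1).factorial) ^ (a * (p ^ b - 1)) :=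
    calc p ^ (b * (p - 2)) ≤ p ^ (a * (p ^ b - 1)) := Nat.pow_le_pow_right (by omega) hexp
      _ ≤ ((p - 1).factorial) ^ (a * (p ^ b - 1)) :=
        Nat.pow_le_pow_left (aux_p_le_fact p hp) _
  have ht : 1 ≤ p ^ b := Nat.one_le_pow _ _ (by omega)
  have hmul : a * (p ^ b - 1) + a = a * p ^ b := by
    have : a * ((p ^ b - 1) + 1) = a * p ^ b := by rw [Nat.sub_add_cancel ht]
    rw [← this]; ring
  have he : (a - 1) + a * (p ^ b - 1) = a * p ^ b - 1 := by omega
  calc (a.factorial * p ^ b) ^ (p - 2)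
      = (a.factorial) ^ (p - 2) * p ^ (b * (p - 2)) := by rw [mul_pow, ← pow_mul]
    _ ≤ ((p - 1).factorial) ^ (a - 1) * ((p - 1).factorial) ^ (a * (p ^ b - 1)) :=
        Nat.mul_le_mul hA hB
    _ = ((p - 1).factorial) ^ (a * p ^ b - 1) := by rw [← pow_add, he]

/-- Lemma 6.1 (first part): fix a prime `p > 3` and `n ≥ 2` with base-`p` expansion
`n = Σ_{i<k} a i * p ^ b i` (so `0 < a i ≤ p - 1` and `b` strictly increasing).  Then
`Π_{i<k} (a i)! * p ^ (b i) ≤ ((p-1)!) ^ ((n-1)/(p-2))`, a real power. -/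
theorem base_p_centralizer_bound_large_p
    (p n k : ℕ) (a b : ℕ → ℕ) (hp : p.Prime) (hp3 : 3 < p) (hn : 2 ≤ n)
    (ha : ∀ i < k, 0 < a i ∧ a i ≤ p - 1)
    (hb : ∀ i j, i < j → j < k → b i < b j)
    (hsum : n = ∑ i ∈ Finset.range k, a i * p ^ b i) :
    ((∏ i ∈ Finset.range k, (a i).factorial * p ^ b i : ℕ) : ℝ) ≤
      ((Nat.factorial (p - 1) : ℝ)) ^ (((n : ℝ) - 1) / ((p : ℝ) - 2)) := by
  have hp5 : 5 ≤ p := by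
    by_contra h
    have : p = 4 := by omega
    rw [this] at hp
    norm_num at hp
  have hk : 1 ≤ k := by
    by_contra h
    have : k = 0 := by omega
    rw [this] at hsum
    simp at hsum
    omega
  -- natural-number key inequality
  have hterm : ∀ i ∈ Finset.range k, 1 ≤ a i * p ^ b i := fun i hi => by
    have := (ha i (Finset.mem_range.mp hi)).1
    exact Nat.one_le_iff_ne_zero.mpr (by positivity)
  have hsum' : (∑ i ∈ Finset.range k, (a i * p ^ b i - 1)) + k = n := by
    have heq : ∑ i ∈ Finset.range k, ((a i * p ^ b i - 1) + 1) =
        ∑ i ∈ Finset.range k, a i * p ^ b i :=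
      Finset.sum_congr rfl fun i hi => by rw [Nat.sub_add_cancel (hterm i hi)]
    rw [Finset.sum_add_distrib, Finset.sum_const, Finset.card_range, smul_eq_mul,
      mul_one] at heq
    omega
  have key : (∏ i ∈ Finset.range k, (a i).factorial * p ^ b i) ^ (p - 2) ≤
      ((p - 1).factorial) ^ (n - 1) := by
    rw [← Finset.prod_pow]
    calc ∏ i ∈ Finset.range k, ((a i).factorial * p ^ b i) ^ (p - 2)
        ≤ ∏ i ∈ Finset.range k, ((p - 1).factorial) ^ (a i * p ^ b i - 1) := by
          apply Finset.prod_le_prod' fun i hi => ?_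
          exact aux_digit_bound p (a i) (b i) hp5 (ha i (Finset.mem_range.mp hi)).1
            (ha i (Finset.mem_range.mp hi)).2
      _ = ((p - 1).factorial) ^ (∑ i ∈ Finset.range k, (a i * p ^ b i - 1)) :=
          Finset.prod_pow_eq_pow_sum _ _ _
      _ ≤ ((p - 1).factorial) ^ (n - 1) :=
          Nat.pow_le_pow_right (Nat.factorial_pos _) (by omega)
  -- move to the reals
  have hF1 : (1 : ℝ) ≤ ((p - 1).factorial : ℝ) := by
    exact_mod_cast Nat.one_le_iff_ne_zero.mpr (Nat.factorial_pos _).ne'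
  have hF0 : (0 : ℝ) ≤ ((p - 1).factorial : ℝ) := by linarith
  set X : ℕ := ∏ i ∈ Finset.range k, (a i).factorial * p ^ b i with hX
  set r : ℝ := ((n : ℝ) - 1) / ((p : ℝ) - 2) with hr
  have hrhs : (((p - 1).factorial : ℝ) ^ r) ^ (p - 2) = ((p - 1).factorial : ℝ) ^ (n - 1) := by
    rw [← Real.rpow_natCast (((p - 1).factorial : ℝ) ^ r) (p - 2), ← Real.rpow_mul hF0]
    have hcast : ((p - 2 : ℕ) : ℝ) = (p : ℝ) - 2 := by
      push_cast [Nat.cast_sub (by omega : 2 ≤ p)]; ring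
    have hne : (p : ℝ) - 2 ≠ 0 := by
      have : (5 : ℝ) ≤ (p : ℝ) := by exact_mod_cast hp5
      linarith
    rw [hr, hcast, div_mul_cancel₀ _ hne]
    have : ((n : ℝ) - 1) = ((n - 1 : ℕ) : ℝ) := by
      push_cast [Nat.cast_sub (by omega : 1 ≤ n)]; ring
    rw [this, Real.rpow_natCast]
  have hpow : ((X : ℝ)) ^ (p - 2) ≤ (((p - 1).factorial : ℝ) ^ r) ^ (p - 2) := by
    rw [hrhs]
    exact_mod_cast key
  exact le_of_pow_le_pow_left₀ (by omega) (Real.rpow_nonneg hF0 r) hpow
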